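/- Let M ∈ ℂ^{n×n} with entries m_{i,k} (indices 0,…,n−1), and define m̃_{i,k} = m_{(i−1) mod n, k} − (−1)^{g(k)} · m_{i, (k+1) mod n}, i.e., m̃_{i,k} is the (i,k) entry of the Sylvester displacement ∇_{Z_1,Z_{−1}}[M]. Then M admits the decomposition M = (1/2) · Σ_{i=0}^{n−1} Σ_{k=0}^{n−1} m̃_{i,k} · Z_1^i · Z_{−1}^{n−1−k}. -/
import Mathlib


open Matrix

/-- The `n × n` unit `f`-circulant matrix `Z_f`: entries `(Z_f)_{i,k} = 1` if `i = k+1`,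
`(Z_f)_{0,n−1} = f`, and `0` otherwise. -/
noncomputable def Zf (n : ℕ) (f : ℝ) : Matrix (Fin n) (Fin n) ℂ :=
  Matrix.of fun i k =>
    if (i : ℕ) = (k : ℕ) + 1 then 1
    else if (i : ℕ) = 0 ∧ (k : ℕ) = n - 1 then (f : ℂ)
    else 0

/-- The `n × n` reversal matrix `J`: entries `J_{i,k} = 1` if `i + k = n − 1`, else `0`. -/
noncomputable def Jrev (n : ℕ) : Matrix (Fin n) (Fin n) ℂ :=
  Matrix.of fun i k => if (i : ℕ) + (k : ℕ) = n - 1 then 1 else 0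

/-- The `f`-circulant matrix `Z_f(v)` generated by a vector `v ∈ ℂ^n`:
`(Z_f(v))_{i,k} = v_{i−k}` if `i ≥ k`, and `(Z_f(v))_{i,k} = f · v_{n+i−k}` if `i < k`. -/
noncomputable def ZfVec (n : ℕ) (f : ℝ) (v : Fin n → ℂ) : Matrix (Fin n) (Fin n) ℂ :=
  Matrix.of fun i k =>
    (if (k : ℕ) ≤ (i : ℕ) then 1 else (f : ℂ)) *
      v ⟨((i : ℕ) + n - (k : ℕ)) % n, Nat.mod_lt _ i.pos⟩

/-- g(k) = 0 for 0 ≤ k ≤ n−2 and g(n−1) = 1. -/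
def gfun (n k : ℕ) : ℕ := if k = n - 1 then 1 else 0

lemma mod_cases2 {n : ℕ} (hn : 0 < n) (x : ℕ) (h : x < 2 * n) :
    x % n = if x < n then x else x - n := by
  split
  · exact Nat.mod_eq_of_lt ‹_›
  · rw [Nat.mod_eq_sub_mod (le_of_not_gt ‹_›), Nat.mod_eq_of_lt (by omega)]

lemma mod_split2 {n : ℕ} (hn : 0 < n) (x : ℕ) (h : x < 2 * n) :
    x = x % n ∨ x = x % n + n := by
  rw [mod_cases2 hn x h]; split <;> omega

lemma mod_split3 {n : ℕ} (hn : 0 < n) (x : ℕ) (h : x < 3 * n) :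
    x = x % n ∨ x = x % n + n ∨ x = x % n + 2 * n := by
  rcases Nat.lt_or_ge x (2 * n) with h' | h'
  · rcases mod_split2 hn x h' with h2 | h2
    · exact Or.inl h2
    · exact Or.inr (Or.inl h2)
  · right; right
    have h1 : x % n = x - 2 * n := by
      rw [Nat.mod_eq_sub_mod (by omega : n ≤ x),
        Nat.mod_eq_sub_mod (by omega : n ≤ x - n), Nat.mod_eq_of_lt (by omega)]
      omega
    omega

lemma Zf_pow_apply (n : ℕ) (f : ℝ) (m : ℕ) (hm : m ≤ n) (a b : Fin n) :
    ((Zf n f) ^ m) a b =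
      if (a : ℕ) = ((b : ℕ) + m) % n then
        (if (b : ℕ) + m < n then 1 else (f : ℂ)) else 0 := by
  have hn : 0 < n := a.pos
  induction m generalizing a with
  | zero =>
    simp only [pow_zero, Matrix.one_apply, Nat.add_zero, Nat.mod_eq_of_lt b.isLt,
      if_pos b.isLt, Fin.ext_iff]
  | succ m ih =>
    have hm' : m ≤ n := by omega
    rw [pow_succ', Matrix.mul_apply]
    have hc0 : ((a : ℕ) + n - 1) % n < n := Nat.mod_lt _ hn
    rw [Finset.sum_eq_single (⟨((a : ℕ) + n - 1) % n, hc0⟩ : Fin n)]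
    · rw [ih hm']
      simp only [Zf, Matrix.of_apply]
      simp only [mod_cases2 hn ((a:ℕ) + n - 1) (by omega),
        mod_cases2 hn ((b:ℕ) + m) (by omega), mod_cases2 hn ((b:ℕ) + (m+1)) (by omega)]
      have hb := b.isLt
      have ha := a.isLt
      split_ifs <;> first | (exfalso; omega) | norm_num
    · intro c _ hne
      have h1 : (c : ℕ) ≠ ((a : ℕ) + n - 1) % n := fun h => hne (Fin.ext h)
      rw [mod_cases2 hn ((a:ℕ) + n - 1) (by omega)] at h1
      have hz : (Zf n f) a c = 0 := by
        simp only [Zf, Matrix.of_apply]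
        have hb := b.isLt
        have ha := a.isLt
        have hcl := c.isLt
        split at h1 <;> split_ifs <;> first | rfl | (exfalso; omega)
      rw [hz, zero_mul]
    · intro h; exact absurd (Finset.mem_univ _) h


/-- Sylvester-type LCU decomposition: with m-tilde_{i,k} the (i,k) entry of
∇_{Z_1,Z_{−1}}[M], M = (1/2) · Σ_{i,k} m-tilde_{i,k} · Z_1^i · Z_{−1}^{n−1−k}. -/
theorem sylvester_LCU_decomposition (n : ℕ) (M : Matrix (Fin n) (Fin n) ℂ) :
    M = (1 / 2 : ℂ) •
      ∑ i : Fin n, ∑ k : Fin n,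
        (M ⟨((i : ℕ) + n - 1) % n, Nat.mod_lt _ i.pos⟩ k -
            (-1 : ℂ) ^ gfun n (k : ℕ) *
              M i ⟨((k : ℕ) + 1) % n, Nat.mod_lt _ k.pos⟩) •
          (Zf n 1 ^ (i : ℕ) * Zf n (-1) ^ (n - 1 - (k : ℕ))) := by
  ext a b
  have hn : 0 < n := a.pos
  have ha := a.isLt
  have hb := b.isLt
  simp only [Matrix.smul_apply, Matrix.sum_apply, smul_eq_mul]
  have hprod : ∀ i k : Fin n,
      (Zf n 1 ^ (i : ℕ) * Zf n (-1) ^ (n - 1 - (k : ℕ))) a b =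
        if (a : ℕ) = ((b : ℕ) + (n - 1 - (k : ℕ)) + (i : ℕ)) % n then
          (if (b : ℕ) + (n - 1 - (k : ℕ)) < n then 1 else (-1 : ℂ)) else 0 := by
    intro i k
    have hk := k.isLt
    have hi := i.isLt
    rw [Matrix.mul_apply]
    rw [Finset.sum_eq_single
        (⟨((b : ℕ) + (n - 1 - (k : ℕ))) % n, Nat.mod_lt _ hn⟩ : Fin n)]
    · rw [Zf_pow_apply n 1 _ (le_of_lt hi), Zf_pow_apply n (-1) _ (by omega)]
      simp only [Fin.val_mk, eq_self_iff_true, if_true, Complex.ofReal_one,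
        Complex.ofReal_neg, ite_self, Nat.mod_add_mod, ite_mul, one_mul, zero_mul]
    · intro c _ hne
      rw [Zf_pow_apply n (-1) _ (by omega)]
      have h1 : (c : ℕ) ≠ ((b : ℕ) + (n - 1 - (k : ℕ))) % n := fun h => hne (Fin.ext h)
      rw [if_neg h1, mul_zero]
    · intro h; exact absurd (Finset.mem_univ _) h
  simp only [hprod]
  rw [Finset.sum_comm]
  set F : ℕ → ℂ := fun j =>
    (if j ≤ (b : ℕ) then (-1 : ℂ) else 1) *
      M ⟨((a : ℕ) + n - j) % n, Nat.mod_lt _ hn⟩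
        ⟨((b : ℕ) + n - j) % n, Nat.mod_lt _ hn⟩ with hF
  have hkey : ∀ k : Fin n,
      (∑ i : Fin n,
        (M ⟨((i : ℕ) + n - 1) % n, Nat.mod_lt _ i.pos⟩ k -
            (-1 : ℂ) ^ gfun n (k : ℕ) *
              M i ⟨((k : ℕ) + 1) % n, Nat.mod_lt _ k.pos⟩) *
          (if (a : ℕ) = ((b : ℕ) + (n - 1 - (k : ℕ)) + (i : ℕ)) % n then
            (if (b : ℕ) + (n - 1 - (k : ℕ)) < n then 1 else (-1 : ℂ)) else 0)) =
        F (((b : ℕ) + (n - 1 - (k : ℕ))) % n + 1) -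
          F (((b : ℕ) + (n - 1 - (k : ℕ))) % n) := by
    intro k
    have hk := k.isLt
    have hjlt : ((b : ℕ) + (n - 1 - (k : ℕ))) % n < n := Nat.mod_lt _ hn
    have hjD := mod_split2 hn ((b : ℕ) + (n - 1 - (k : ℕ))) (by omega)
    set j := ((b : ℕ) + (n - 1 - (k : ℕ))) % n with hj
    set i0 : Fin n := (⟨((a : ℕ) + n - j) % n, Nat.mod_lt _ hn⟩ : Fin n) with hi0
    have hi0v : (i0 : ℕ) = ((a : ℕ) + n - j) % n := rfl
    have hi0lt : (i0 : ℕ) < n := i0.isLt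
    have hi0D := mod_split2 hn ((a : ℕ) + n - j) (by omega)
    rw [← hi0v] at hi0D
    rw [Finset.sum_eq_single i0]
    · have hcond : (a : ℕ) = ((b : ℕ) + (n - 1 - (k : ℕ)) + (i0 : ℕ)) % n := by
        have hD3 := mod_split3 hn ((b : ℕ) + (n - 1 - (k : ℕ)) + (i0 : ℕ)) (by omega)
        have hlt3 : ((b : ℕ) + (n - 1 - (k : ℕ)) + (i0 : ℕ)) % n < n := Nat.mod_lt _ hn
        omega
      rw [if_pos hcond]
      have e1 : (⟨((i0 : ℕ) + n - 1) % n, Nat.mod_lt _ i0.pos⟩ : Fin n) =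
          (⟨((a : ℕ) + n - (j + 1)) % n, Nat.mod_lt _ hn⟩ : Fin n) := by
        apply Fin.ext
        show ((i0 : ℕ) + n - 1) % n = ((a : ℕ) + n - (j + 1)) % n
        have d1 := mod_split2 hn ((i0 : ℕ) + n - 1) (by omega)
        have l1 : ((i0 : ℕ) + n - 1) % n < n := Nat.mod_lt _ hn
        have d2 := mod_split2 hn ((a : ℕ) + n - (j + 1)) (by omega)
        have l2 : ((a : ℕ) + n - (j + 1)) % n < n := Nat.mod_lt _ hn
        omega
      have e2 : k = (⟨((b : ℕ) + n - (j + 1)) % n, Nat.mod_lt _ hn⟩ : Fin n) := by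
        apply Fin.ext
        show (k : ℕ) = ((b : ℕ) + n - (j + 1)) % n
        have d2 := mod_split2 hn ((b : ℕ) + n - (j + 1)) (by omega)
        have l2 : ((b : ℕ) + n - (j + 1)) % n < n := Nat.mod_lt _ hn
        omega
      have e4 : (⟨((k : ℕ) + 1) % n, Nat.mod_lt _ k.pos⟩ : Fin n) =
          (⟨((b : ℕ) + n - j) % n, Nat.mod_lt _ hn⟩ : Fin n) := by
        apply Fin.ext
        show ((k : ℕ) + 1) % n = ((b : ℕ) + n - j) % n
        have d1 := mod_split2 hn ((k : ℕ) + 1) (by omega)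
        have l1 : ((k : ℕ) + 1) % n < n := Nat.mod_lt _ hn
        have d2 := mod_split2 hn ((b : ℕ) + n - j) (by omega)
        have l2 : ((b : ℕ) + n - j) % n < n := Nat.mod_lt _ hn
        omega
      simp only [hF]
      rw [← e1]
      conv_rhs => rw [← e2, ← e4, ← hi0]
      by_cases hcase : (b : ℕ) + (n - 1 - (k : ℕ)) < n
      · by_cases hkn : (k : ℕ) = n - 1
        · have hg : gfun n (k : ℕ) = 1 := by simp [gfun, hkn]
          rw [hg, if_pos hcase, if_neg (by omega : ¬ j + 1 ≤ (b : ℕ)),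
            if_pos (by omega : j ≤ (b : ℕ))]
          ring
        · have hg : gfun n (k : ℕ) = 0 := by simp [gfun, hkn]
          rw [hg, if_pos hcase, if_neg (by omega : ¬ j + 1 ≤ (b : ℕ)),
            if_neg (by omega : ¬ j ≤ (b : ℕ))]
          ring
      · have hkn : (k : ℕ) ≠ n - 1 := by omega
        have hg : gfun n (k : ℕ) = 0 := by simp [gfun, hkn]
        rw [hg, if_neg hcase, if_pos (by omega : j + 1 ≤ (b : ℕ)),
          if_pos (by omega : j ≤ (b : ℕ))]
        ring
    · intro i _ hne
      have hne' : (i : ℕ) ≠ (i0 : ℕ) := fun h => hne (Fin.ext h)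
      have hi := i.isLt
      have hD3 := mod_split3 hn ((b : ℕ) + (n - 1 - (k : ℕ)) + (i : ℕ)) (by omega)
      have hlt3 : ((b : ℕ) + (n - 1 - (k : ℕ)) + (i : ℕ)) % n < n := Nat.mod_lt _ hn
      rw [if_neg (by omega : ¬ (a : ℕ) = ((b : ℕ) + (n - 1 - (k : ℕ)) + (i : ℕ)) % n),
        mul_zero]
    · intro h; exact absurd (Finset.mem_univ _) h
  simp only [hkey]
  let e : Fin n ≃ Fin n :=
    { toFun := fun k => ⟨((b : ℕ) + (n - 1 - (k : ℕ))) % n, Nat.mod_lt _ hn⟩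
      invFun := fun t => ⟨((b : ℕ) + (n - 1 - (t : ℕ))) % n, Nat.mod_lt _ hn⟩
      left_inv := by
        intro k
        apply Fin.ext
        show ((b : ℕ) + (n - 1 - (((b : ℕ) + (n - 1 - (k : ℕ))) % n))) % n = (k : ℕ)
        have hk := k.isLt
        have d1 := mod_split2 hn ((b : ℕ) + (n - 1 - (k : ℕ))) (by omega)
        have l1 : ((b : ℕ) + (n - 1 - (k : ℕ))) % n < n := Nat.mod_lt _ hn
        have d2 := mod_split2 hn
          ((b : ℕ) + (n - 1 - (((b : ℕ) + (n - 1 - (k : ℕ))) % n))) (by omega)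
        have l2 : ((b : ℕ) + (n - 1 - (((b : ℕ) + (n - 1 - (k : ℕ))) % n))) % n < n :=
          Nat.mod_lt _ hn
        omega
      right_inv := by
        intro k
        apply Fin.ext
        show ((b : ℕ) + (n - 1 - (((b : ℕ) + (n - 1 - (k : ℕ))) % n))) % n = (k : ℕ)
        have hk := k.isLt
        have d1 := mod_split2 hn ((b : ℕ) + (n - 1 - (k : ℕ))) (by omega)
        have l1 : ((b : ℕ) + (n - 1 - (k : ℕ))) % n < n := Nat.mod_lt _ hn
        have d2 := mod_split2 hn
          ((b : ℕ) + (n - 1 - (((b : ℕ) + (n - 1 - (k : ℕ))) % n))) (by omega)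
        have l2 : ((b : ℕ) + (n - 1 - (((b : ℕ) + (n - 1 - (k : ℕ))) % n))) % n < n :=
          Nat.mod_lt _ hn
        omega }
  have hre : (∑ k : Fin n,
      (F (((b : ℕ) + (n - 1 - (k : ℕ))) % n + 1) - F (((b : ℕ) + (n - 1 - (k : ℕ))) % n)))
      = ∑ t : Fin n, (F ((t : ℕ) + 1) - F (t : ℕ)) :=
    Equiv.sum_comp e (fun t : Fin n => F ((t : ℕ) + 1) - F (t : ℕ))
  rw [hre, Fin.sum_univ_eq_sum_range (fun t => F (t + 1) - F t) n, Finset.sum_range_sub]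
  have hFn : F n = M a b := by
    simp only [hF]
    rw [if_neg (by omega : ¬ n ≤ (b : ℕ))]
    have e1 : (⟨((a : ℕ) + n - n) % n, Nat.mod_lt _ hn⟩ : Fin n) = a := by
      apply Fin.ext
      show ((a : ℕ) + n - n) % n = (a : ℕ)
      rw [Nat.add_sub_cancel, Nat.mod_eq_of_lt ha]
    have e2 : (⟨((b : ℕ) + n - n) % n, Nat.mod_lt _ hn⟩ : Fin n) = b := by
      apply Fin.ext
      show ((b : ℕ) + n - n) % n = (b : ℕ)
      rw [Nat.add_sub_cancel, Nat.mod_eq_of_lt hb]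
    rw [e1, e2, one_mul]
  have hF0 : F 0 = -(M a b) := by
    simp only [hF]
    rw [if_pos (Nat.zero_le _)]
    have e1 : (⟨((a : ℕ) + n - 0) % n, Nat.mod_lt _ hn⟩ : Fin n) = a := by
      apply Fin.ext
      show ((a : ℕ) + n - 0) % n = (a : ℕ)
      rw [Nat.sub_zero, Nat.add_mod_right, Nat.mod_eq_of_lt ha]
    have e2 : (⟨((b : ℕ) + n - 0) % n, Nat.mod_lt _ hn⟩ : Fin n) = b := by
      apply Fin.ext
      show ((b : ℕ) + n - 0) % n = (b : ℕ)
      rw [Nat.sub_zero, Nat.add_mod_right, Nat.mod_eq_of_lt hb]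
    rw [e1, e2]
    ring
  rw [hFn, hF0]
  ring
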